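/- arXiv:2105.13181 — 2 statements merged into one kernel-verified Lean document; each statement's English description precedes it below -/
import Mathlib

section
/- Let P(λ) = Σ_{i=0}^{m} λⁱAᵢ be an n×n matrix polynomial and λ ∈ ℂ. The backward error η₂(λ, P) := min{‖(‖ΔA₀‖₂,…,‖ΔA_m‖₂)‖₂ : det(P(λ) + Σ λⁱΔAᵢ) = 0} satisfies η₂(λ, P) = σ_min(P(λ)) / ‖(1, λ, …, λᵐ)‖₂, where σ_min denotes the smallest singular value. -/
open Matrix BigOperators

noncomputable def evnorm {n : Type*} [Fintype n] (v : n → ℂ) : ℝ :=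
  Real.sqrt (∑ i, ‖v i‖ ^ 2)

noncomputable def frob {m n : Type*} [Fintype m] [Fintype n] (M : Matrix m n ℂ) : ℝ :=
  Real.sqrt (∑ i, ∑ j, ‖M i j‖ ^ 2)

noncomputable def sigmaMax {m n : Type*} [Fintype m] [Fintype n] (T : Matrix m n ℂ) : ℝ :=
  sSup {x | ∃ v, evnorm v = 1 ∧ x = evnorm (T.mulVec v)}

noncomputable def sigmaMin {m n : Type*} [Fintype m] [Fintype n] (T : Matrix m n ℂ) : ℝ :=
  sInf {x | ∃ v, evnorm v = 1 ∧ x = evnorm (T.mulVec v)}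

def hcat3 {i a b c : Type*} (A : Matrix i a ℂ) (B : Matrix i b ℂ) (C : Matrix i c ℂ) :
    Matrix i (a ⊕ b ⊕ c) ℂ :=
  Matrix.of fun x j => match j with
    | Sum.inl j => A x j
    | Sum.inr (Sum.inl j) => B x j
    | Sum.inr (Sum.inr j) => C x j

def vcat3 {a b c j : Type*} (A : Matrix a j ℂ) (B : Matrix b j ℂ) (C : Matrix c j ℂ) :
    Matrix (a ⊕ b ⊕ c) j ℂ :=
  Matrix.of fun i y => match i with
    | Sum.inl i => A i y
    | Sum.inr (Sum.inl i) => B i y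
    | Sum.inr (Sum.inr i) => C i y

noncomputable def Lnorm (m : ℕ) (μ : ℂ) : ℝ :=
  Real.sqrt (∑ i ∈ Finset.range (m + 1), ‖μ‖ ^ (2 * i))

section Aux
variable {k l : ℕ}

def toE (v : Fin k → ℂ) : EuclideanSpace ℂ (Fin k) := WithLp.toLp 2 v

lemma evnorm_eq_norm (v : Fin k → ℂ) : evnorm v = ‖toE v‖ := by
  rw [EuclideanSpace.norm_eq]; rfl

lemma toE_sum {ι : Type*} (s : Finset ι) (f : ι → (Fin k → ℂ)) :
    toE (∑ i ∈ s, f i) = ∑ i ∈ s, toE (f i) := WithLp.toLp_sum (p := 2) (s := s) (f := f)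

lemma evnorm_nonneg (v : Fin k → ℂ) : 0 ≤ evnorm v := Real.sqrt_nonneg _

lemma evnorm_smul (c : ℂ) (u : Fin k → ℂ) : evnorm (c • u) = ‖c‖ * evnorm u := by
  simp only [evnorm, Pi.smul_apply, smul_eq_mul, norm_mul, mul_pow, ← Finset.mul_sum]
  rw [Real.sqrt_mul (sq_nonneg _), Real.sqrt_sq (norm_nonneg c)]

lemma evnorm_neg (u : Fin k → ℂ) : evnorm (-u) = evnorm u := by
  simp [evnorm]

lemma evnorm_sum_le {ι : Type*} (s : Finset ι) (f : ι → (Fin k → ℂ)) :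
    evnorm (∑ i ∈ s, f i) ≤ ∑ i ∈ s, evnorm (f i) := by
  rw [evnorm_eq_norm, toE_sum]
  simpa only [evnorm_eq_norm] using norm_sum_le s (fun i => toE (f i))

lemma cont_mulVec (T : Matrix (Fin l) (Fin k) ℂ) :
    Continuous fun w : EuclideanSpace ℂ (Fin k) => toE (T.mulVec w) := by
  have h : (fun w : EuclideanSpace ℂ (Fin k) => toE (T.mulVec w)) = Matrix.toEuclideanLin T := by
    funext w; rw [Matrix.toEuclideanLin_apply]; rfl
  rw [h]; exact LinearMap.continuous_of_finiteDimensional _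

lemma sigma_set_eq (T : Matrix (Fin l) (Fin k) ℂ) :
    {x | ∃ v, evnorm v = 1 ∧ x = evnorm (T.mulVec v)} =
      (fun w : EuclideanSpace ℂ (Fin k) => ‖toE (T.mulVec w)‖) '' Metric.sphere 0 1 := by
  ext x
  constructor
  · rintro ⟨v, hv, rfl⟩
    refine ⟨toE v, ?_, ?_⟩
    · rw [mem_sphere_zero_iff_norm, ← evnorm_eq_norm]; exact hv
    · exact (evnorm_eq_norm _).symm
  · rintro ⟨w, hw, rfl⟩
    exact ⟨w, by rw [evnorm_eq_norm]; exact mem_sphere_zero_iff_norm.mp hw, (evnorm_eq_norm _).symm⟩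

lemma isCompact_sigma_set (T : Matrix (Fin l) (Fin k) ℂ) :
    IsCompact {x | ∃ v, evnorm v = 1 ∧ x = evnorm (T.mulVec v)} := by
  rw [sigma_set_eq]
  exact (isCompact_sphere 0 1).image (continuous_norm.comp (cont_mulVec T))

lemma nonempty_sigma_set [Nonempty (Fin k)] (T : Matrix (Fin l) (Fin k) ℂ) :
    {x | ∃ v, evnorm v = 1 ∧ x = evnorm (T.mulVec v)}.Nonempty := by
  refine ⟨_, ⟨(EuclideanSpace.single (Classical.arbitrary (Fin k)) (1:ℂ) : EuclideanSpace ℂ (Fin k)), ?_, rfl⟩⟩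
  rw [evnorm_eq_norm]
  show ‖EuclideanSpace.single (Classical.arbitrary (Fin k)) (1:ℂ)‖ = 1
  simp [EuclideanSpace.norm_single]

lemma le_sigmaMax (T : Matrix (Fin l) (Fin k) ℂ) {v : Fin k → ℂ} (hv : evnorm v = 1) :
    evnorm (T.mulVec v) ≤ sigmaMax T :=
  le_csSup (isCompact_sigma_set T).bddAbove ⟨v, hv, rfl⟩

lemma sigmaMax_nonneg [Nonempty (Fin k)] (T : Matrix (Fin l) (Fin k) ℂ) : 0 ≤ sigmaMax T := by
  obtain ⟨x, v, hv, rfl⟩ := nonempty_sigma_set T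
  exact le_trans (evnorm_nonneg _) (le_sigmaMax T hv)

lemma sigmaMin_exists [Nonempty (Fin k)] (T : Matrix (Fin l) (Fin k) ℂ) :
    ∃ v, evnorm v = 1 ∧ sigmaMin T = evnorm (T.mulVec v) :=
  (isCompact_sigma_set T).sInf_mem (nonempty_sigma_set T)

lemma sigmaMin_le (T : Matrix (Fin l) (Fin k) ℂ) {v : Fin k → ℂ} (hv : evnorm v = 1) :
    sigmaMin T ≤ evnorm (T.mulVec v) :=
  csInf_le (isCompact_sigma_set T).bddBelow ⟨v, hv, rfl⟩

lemma vecMulVec_mulVec' (u : Fin l → ℂ) (w v : Fin k → ℂ) :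
    (vecMulVec u w) *ᵥ v = (w ⬝ᵥ v) • u := by
  ext i
  simp [vecMulVec, mulVec, dotProduct, Finset.sum_mul, Finset.mul_sum, mul_comm, mul_assoc, mul_left_comm]

lemma star_dotProduct_eq_inner (x v : Fin k → ℂ) :
    star x ⬝ᵥ v = inner ℂ (toE x) (toE v) := by
  simp [dotProduct, PiLp.inner_apply, RCLike.inner_apply, toE, mul_comm]

lemma star_dotProduct_self {x : Fin k → ℂ} (hx : evnorm x = 1) : star x ⬝ᵥ x = 1 := by
  rw [star_dotProduct_eq_inner, inner_self_eq_norm_sq_to_K, ← evnorm_eq_norm, hx]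
  norm_num

lemma sigmaMax_rankOne [Nonempty (Fin k)] (u : Fin l → ℂ) {x : Fin k → ℂ} (hx : evnorm x = 1) :
    sigmaMax (vecMulVec u (star x)) = evnorm u := by
  apply le_antisymm
  · apply csSup_le (nonempty_sigma_set _)
    rintro y ⟨v, hv, rfl⟩
    rw [vecMulVec_mulVec', evnorm_smul]
    calc ‖star x ⬝ᵥ v‖ * evnorm u ≤ 1 * evnorm u := by
          apply mul_le_mul_of_nonneg_right _ (evnorm_nonneg u)
          rw [star_dotProduct_eq_inner]
          have h := norm_inner_le_norm (𝕜 := ℂ) (toE x) (toE v)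
          rw [← evnorm_eq_norm, ← evnorm_eq_norm, hx, hv] at h
          simpa using h
      _ = evnorm u := one_mul _
  · apply le_csSup (isCompact_sigma_set _).bddAbove
    refine ⟨x, hx, ?_⟩
    rw [vecMulVec_mulVec', star_dotProduct_self hx, one_smul]

lemma sum_mulVec' {ι : Type*} (s : Finset ι) (M : ι → Matrix (Fin l) (Fin k) ℂ) (v : Fin k → ℂ) :
    (∑ i ∈ s, M i) *ᵥ v = ∑ i ∈ s, (M i) *ᵥ v := by
  ext j
  simp only [Matrix.mulVec, dotProduct, Finset.sum_apply, Matrix.sum_apply, Finset.sum_mul]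
  exact Finset.sum_comm

end Aux

lemma Lnorm_sq' (m : ℕ) (μ : ℂ) : Lnorm m μ ^ 2 = ∑ i ∈ Finset.range (m+1), ‖μ‖^(2*i) :=
  Real.sq_sqrt (Finset.sum_nonneg fun i _ => pow_nonneg (norm_nonneg μ) _)

lemma one_le_Lnorm (m : ℕ) (μ : ℂ) : 1 ≤ Lnorm m μ := by
  rw [show (1:ℝ) = Real.sqrt 1 from (Real.sqrt_one).symm]
  apply Real.sqrt_le_sqrt
  have h0 : (0:ℕ) ∈ Finset.range (m+1) := by simp
  have := Finset.single_le_sum (f := fun i => ‖μ‖^(2*i))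
    (fun i _ => pow_nonneg (norm_nonneg μ) _) h0
  simpa using this

theorem stmt12 {n m : ℕ} (μ : ℂ)
    (Amat : Fin (m + 1) → Matrix (Fin n) (Fin n) ℂ)
    (P : Matrix (Fin n) (Fin n) ℂ) (hP : P = ∑ i : Fin (m + 1), μ ^ (i : ℕ) • Amat i) :
    sInf {x | ∃ ΔA : Fin (m + 1) → Matrix (Fin n) (Fin n) ℂ,
        (P + ∑ i : Fin (m + 1), μ ^ (i : ℕ) • ΔA i).det = 0 ∧
        x = Real.sqrt (∑ i, sigmaMax (ΔA i) ^ 2)} = sigmaMin P / Lnorm m μ := by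
  rcases Nat.eq_zero_or_pos n with hn | hn
  · subst hn
    have h1 : {x | ∃ ΔA : Fin (m + 1) → Matrix (Fin 0) (Fin 0) ℂ,
        (P + ∑ i : Fin (m + 1), μ ^ (i : ℕ) • ΔA i).det = 0 ∧
        x = Real.sqrt (∑ i, sigmaMax (ΔA i) ^ 2)} = (∅ : Set ℝ) := by
      apply Set.eq_empty_iff_forall_notMem.mpr
      rintro x ⟨ΔA, hdet, -⟩
      rw [Matrix.det_isEmpty] at hdet
      exact one_ne_zero hdet
    rw [h1]
    have h2 : sigmaMin P = 0 := by
      have he : {x | ∃ v : Fin 0 → ℂ, evnorm v = 1 ∧ x = evnorm (P.mulVec v)} = ∅ := by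
        apply Set.eq_empty_iff_forall_notMem.mpr
        rintro x ⟨v, hv, -⟩
        simp [evnorm] at hv
      rw [sigmaMin, he, Real.sInf_empty]
    rw [h2, Real.sInf_empty, zero_div]
  · haveI : Nonempty (Fin n) := ⟨⟨0, hn⟩⟩
    have hL1 : 1 ≤ Lnorm m μ := one_le_Lnorm m μ
    have hL0 : 0 < Lnorm m μ := lt_of_lt_of_le one_pos hL1
    obtain ⟨x, hx1, hxmin⟩ := sigmaMin_exists P
    have hσ0 : 0 ≤ sigmaMin P := hxmin ▸ evnorm_nonneg _
    have hsumsq : ∑ i : Fin (m+1), (‖μ‖^(i:ℕ))^2 = Lnorm m μ ^ 2 := by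
      rw [Lnorm_sq', ← Fin.sum_univ_eq_sum_range (fun i => ‖μ‖^(2*i)) (m+1)]
      refine Finset.sum_congr rfl fun i _ => ?_
      rw [← pow_mul, mul_comm]
    have hlb : ∀ y ∈ {x | ∃ ΔA : Fin (m + 1) → Matrix (Fin n) (Fin n) ℂ,
        (P + ∑ i : Fin (m + 1), μ ^ (i : ℕ) • ΔA i).det = 0 ∧
        x = Real.sqrt (∑ i, sigmaMax (ΔA i) ^ 2)}, sigmaMin P / Lnorm m μ ≤ y := by
      rintro y ⟨ΔA, hdet, rfl⟩
      obtain ⟨w, hw0, hw⟩ := (Matrix.exists_mulVec_eq_zero_iff).mpr hdet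
      have hew : evnorm w ≠ 0 := by
        rw [evnorm_eq_norm]
        exact norm_ne_zero_iff.mpr ((WithLp.toLp_eq_zero 2).not.mpr hw0)
      set v : Fin n → ℂ := (((evnorm w)⁻¹ : ℝ) : ℂ) • w with hvdef
      have hv1 : evnorm v = 1 := by
        rw [hvdef, evnorm_smul, Complex.norm_real]
        rw [Real.norm_eq_abs, abs_of_nonneg (inv_nonneg.mpr (evnorm_nonneg w))]
        exact inv_mul_cancel₀ hew
      have hPv : P *ᵥ v = -((∑ i : Fin (m+1), μ ^ (i:ℕ) • ΔA i) *ᵥ v) := by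
        have h2 : (P + ∑ i : Fin (m+1), μ ^ (i:ℕ) • ΔA i) *ᵥ v = 0 := by
          rw [hvdef, Matrix.mulVec_smul, hw, smul_zero]
        rw [Matrix.add_mulVec] at h2
        exact eq_neg_of_add_eq_zero_left h2
      have key : sigmaMin P ≤ Lnorm m μ * Real.sqrt (∑ i, sigmaMax (ΔA i) ^ 2) := by
        calc sigmaMin P ≤ evnorm (P *ᵥ v) := sigmaMin_le P hv1
          _ = evnorm ((∑ i : Fin (m+1), μ^(i:ℕ) • ΔA i) *ᵥ v) := by rw [hPv, evnorm_neg]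
          _ = evnorm (∑ i : Fin (m+1), (μ^(i:ℕ) • ΔA i) *ᵥ v) := by rw [sum_mulVec']
          _ ≤ ∑ i : Fin (m+1), evnorm ((μ^(i:ℕ) • ΔA i) *ᵥ v) := evnorm_sum_le _ _
          _ = ∑ i : Fin (m+1), ‖μ‖^(i:ℕ) * evnorm ((ΔA i) *ᵥ v) := by
              refine Finset.sum_congr rfl fun i _ => ?_
              rw [smul_mulVec, evnorm_smul, norm_pow]
          _ ≤ ∑ i : Fin (m+1), ‖μ‖^(i:ℕ) * sigmaMax (ΔA i) := by
              refine Finset.sum_le_sum fun i _ => ?_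
              exact mul_le_mul_of_nonneg_left (le_sigmaMax _ hv1) (pow_nonneg (norm_nonneg μ) _)
          _ ≤ Lnorm m μ * Real.sqrt (∑ i, sigmaMax (ΔA i) ^ 2) := by
              have hs0 : 0 ≤ ∑ i : Fin (m+1), ‖μ‖^(i:ℕ) * sigmaMax (ΔA i) :=
                Finset.sum_nonneg fun i _ => mul_nonneg (pow_nonneg (norm_nonneg μ) _)
                  (sigmaMax_nonneg _)
              have hcs := Finset.sum_mul_sq_le_sq_mul_sq Finset.univ
                  (fun i : Fin (m+1) => ‖μ‖^(i:ℕ)) (fun i => sigmaMax (ΔA i))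
              calc (∑ i : Fin (m+1), ‖μ‖^(i:ℕ) * sigmaMax (ΔA i))
                  = Real.sqrt ((∑ i : Fin (m+1), ‖μ‖^(i:ℕ) * sigmaMax (ΔA i))^2) :=
                    (Real.sqrt_sq hs0).symm
                _ ≤ Real.sqrt ((∑ i : Fin (m+1), (‖μ‖^(i:ℕ))^2) * ∑ i, sigmaMax (ΔA i)^2) :=
                    Real.sqrt_le_sqrt hcs
                _ = Lnorm m μ * Real.sqrt (∑ i, sigmaMax (ΔA i)^2) := by
                    rw [Real.sqrt_mul (Finset.sum_nonneg fun i _ => sq_nonneg _), hsumsq,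
                      Real.sqrt_sq hL0.le]
      rw [div_le_iff₀ hL0]
      calc sigmaMin P ≤ Lnorm m μ * Real.sqrt (∑ i, sigmaMax (ΔA i) ^ 2) := key
        _ = Real.sqrt (∑ i, sigmaMax (ΔA i) ^ 2) * Lnorm m μ := mul_comm _ _
    have hC0 : ((Lnorm m μ ^ 2 : ℝ) : ℂ) ≠ 0 := by
      norm_cast
      positivity
    have hmem : sigmaMin P / Lnorm m μ ∈ {x | ∃ ΔA : Fin (m + 1) → Matrix (Fin n) (Fin n) ℂ,
        (P + ∑ i : Fin (m + 1), μ ^ (i : ℕ) • ΔA i).det = 0 ∧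
        x = Real.sqrt (∑ i, sigmaMax (ΔA i) ^ 2)} := by
      refine ⟨fun i => vecMulVec
        ((-(starRingEnd ℂ μ)^(i:ℕ) / ((Lnorm m μ ^2 : ℝ):ℂ)) • (P *ᵥ x)) (star x), ?_, ?_⟩
      · apply (Matrix.exists_mulVec_eq_zero_iff).mp
        refine ⟨x, ?_, ?_⟩
        · intro h
          rw [h] at hx1
          simp [evnorm] at hx1
        · rw [Matrix.add_mulVec, sum_mulVec']
          have hterm : ∀ i : Fin (m+1),
              (μ^(i:ℕ) • vecMulVec ((-(starRingEnd ℂ μ)^(i:ℕ) / ((Lnorm m μ ^2 : ℝ):ℂ)) • (P *ᵥ x)) (star x)) *ᵥ x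
              = (μ^(i:ℕ) * (-(starRingEnd ℂ μ)^(i:ℕ) / ((Lnorm m μ ^2 : ℝ):ℂ))) • (P *ᵥ x) := by
            intro i
            rw [smul_mulVec, vecMulVec_mulVec', star_dotProduct_self hx1, one_smul, smul_smul]
          rw [Finset.sum_congr rfl (fun i _ => hterm i), ← Finset.sum_smul]
          have hmc : ∀ i : ℕ, μ^i * (starRingEnd ℂ μ)^i = ((‖μ‖^(2*i) : ℝ) : ℂ) := by
            intro i
            rw [← mul_pow, Complex.mul_conj]
            have hns : Complex.normSq μ = ‖μ‖^2 := by
              simp [Complex.normSq_eq_norm_sq]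
            rw [hns]
            push_cast
            rw [← pow_mul]
          have hcoef : (∑ i : Fin (m+1),
              μ^(i:ℕ) * (-(starRingEnd ℂ μ)^(i:ℕ) / ((Lnorm m μ ^2 : ℝ):ℂ))) = -1 := by
            have : ∀ i : Fin (m+1), μ^(i:ℕ) * (-(starRingEnd ℂ μ)^(i:ℕ) / ((Lnorm m μ ^2 : ℝ):ℂ))
                = -(((‖μ‖^(2*(i:ℕ)) : ℝ) : ℂ) / ((Lnorm m μ ^2 : ℝ):ℂ)) := by
              intro i
              rw [← hmc (i:ℕ)]
              ring
            rw [Finset.sum_congr rfl (fun i _ => this i), Finset.sum_neg_distrib, ← Finset.sum_div]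
            rw [show (∑ i : Fin (m+1), ((‖μ‖^(2*(i:ℕ)) : ℝ) : ℂ)) = ((Lnorm m μ ^2 : ℝ):ℂ) by
              norm_cast
              rw [Lnorm_sq', ← Fin.sum_univ_eq_sum_range (fun i => ‖μ‖^(2*i)) (m+1)]]
            rw [div_self hC0]
          rw [hcoef]
          simp
      · have hσmax : ∀ i : Fin (m+1), sigmaMax (vecMulVec
            ((-(starRingEnd ℂ μ)^(i:ℕ) / ((Lnorm m μ ^2 : ℝ):ℂ)) • (P *ᵥ x)) (star x))
            = ‖μ‖^(i:ℕ) / Lnorm m μ ^2 * sigmaMin P := by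
          intro i
          rw [sigmaMax_rankOne _ hx1, evnorm_smul, ← hxmin]
          congr 1
          rw [norm_div, norm_neg, norm_pow, RCLike.norm_conj, Complex.norm_real,
            Real.norm_eq_abs, abs_of_nonneg (by positivity : (0:ℝ) ≤ Lnorm m μ ^2)]
        rw [Finset.sum_congr rfl (fun i _ => by rw [hσmax i])]
        have hsum : ∑ i : Fin (m+1), (‖μ‖^(i:ℕ) / Lnorm m μ ^2 * sigmaMin P)^2
            = (sigmaMin P / Lnorm m μ)^2 := by
          have hh : ∀ i : Fin (m+1), (‖μ‖^(i:ℕ) / Lnorm m μ ^2 * sigmaMin P)^2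
              = (‖μ‖^(i:ℕ))^2 * (sigmaMin P / Lnorm m μ^2)^2 := fun i => by ring
          rw [Finset.sum_congr rfl (fun i _ => hh i), ← Finset.sum_mul, hsumsq]
          field_simp
        rw [hsum, Real.sqrt_sq (div_nonneg hσ0 hL0.le)]
    exact le_antisymm (csInf_le ⟨sigmaMin P / Lnorm m μ, fun y hy => hlb y hy⟩ hmem)
      (le_csInf ⟨_, hmem⟩ hlb)
end

section
/- Let R(λ) = Σ_{i=0}^{m} λⁱAᵢ + C(A − λE)⁻¹B be invertible at λ ∈ ℂ. The backward error under perturbations of the polynomial coefficients only, η(λ, R) := min{‖(‖ΔA₀‖₂,…,‖ΔA_m‖₂)‖₂ : det(R(λ) + Σ λⁱΔAᵢ) = 0}, satisfies η(λ, R) ≤ σ_min(R(λ)) / ‖(1, λ, …, λᵐ)‖₂. -/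
open Matrix BigOperators

lemma evnorm_nonneg' {n : Type*} [Fintype n] (v : n → ℂ) : 0 ≤ evnorm v :=
  Real.sqrt_nonneg _

lemma evnorm_smul' {n : Type*} [Fintype n] (a : ℂ) (v : n → ℂ) :
    evnorm (a • v) = ‖a‖ * evnorm v := by
  unfold evnorm
  rw [← Real.sqrt_sq (norm_nonneg a), ← Real.sqrt_mul (by positivity), Finset.mul_sum]
  congr 1
  exact Finset.sum_congr rfl fun i _ => by simp [norm_mul, mul_pow]

lemma evnorm_cs {n : Type*} [Fintype n] (x v : n → ℂ) :
    ‖∑ j, (starRingEnd ℂ) (x j) * v j‖ ≤ evnorm x * evnorm v := by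
  calc ‖∑ j, (starRingEnd ℂ) (x j) * v j‖ ≤ ∑ j, ‖x j‖ * ‖v j‖ := by
        refine (norm_sum_le _ _).trans (le_of_eq ?_)
        simp [norm_mul]
      _ ≤ evnorm x * evnorm v := by
        unfold evnorm
        rw [← Real.sqrt_mul (by positivity)]
        refine (Real.le_sqrt (by positivity) (by positivity)).mpr ?_
        exact Finset.sum_mul_sq_le_sq_mul_sq _ _ _

lemma mulVec_vecMulVec' {n : Type*} [Fintype n] (u w v : n → ℂ) :
    (vecMulVec u w).mulVec v = (∑ j, w j * v j) • u := by
  funext i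
  simp only [mulVec, vecMulVec, dotProduct, of_apply, Pi.smul_apply, smul_eq_mul,
    Finset.sum_mul]
  exact Finset.sum_congr rfl fun j _ => by ring

theorem stmt13 {n r m : ℕ} (μ : ℂ)
    (Amat : Fin (m + 1) → Matrix (Fin n) (Fin n) ℂ)
    (A E : Matrix (Fin r) (Fin r) ℂ) (B : Matrix (Fin r) (Fin n) ℂ)
    (C : Matrix (Fin n) (Fin r) ℂ)
    (hAE : IsUnit (A - μ • E))
    (R : Matrix (Fin n) (Fin n) ℂ)
    (hR : R = (∑ i : Fin (m + 1), μ ^ (i : ℕ) • Amat i) + C * ((A - μ • E)⁻¹ * B))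
    (hRu : IsUnit R) :
    sInf {x | ∃ ΔA : Fin (m + 1) → Matrix (Fin n) (Fin n) ℂ,
        (R + ∑ i : Fin (m + 1), μ ^ (i : ℕ) • ΔA i).det = 0 ∧
        x = Real.sqrt (∑ i, sigmaMax (ΔA i) ^ 2)} ≤ sigmaMin R / Lnorm m μ := by
  set c : ℝ := ∑ i ∈ Finset.range (m + 1), ‖μ‖ ^ (2 * i) with hc
  have hc0 : 0 < c := by
    refine Finset.sum_pos' (fun i _ => by positivity) ⟨0, by simp⟩
  have hL0 : 0 < Lnorm m μ := Real.sqrt_pos.mpr hc0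
  have hLsq : Lnorm m μ ^ 2 = c := Real.sq_sqrt hc0.le
  rcases Nat.eq_zero_or_pos n with hn | hn
  · subst hn
    have hT : {x | ∃ ΔA : Fin (m + 1) → Matrix (Fin 0) (Fin 0) ℂ,
        (R + ∑ i : Fin (m + 1), μ ^ (i : ℕ) • ΔA i).det = 0 ∧
        x = Real.sqrt (∑ i, sigmaMax (ΔA i) ^ 2)} = ∅ := by
      ext x
      simp [Matrix.det_fin_zero]
    have hS : {x | ∃ v : Fin 0 → ℂ, evnorm v = 1 ∧ x = evnorm (R.mulVec v)} = ∅ := by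
      ext x
      simp only [Set.mem_setOf_eq, Set.mem_empty_iff_false, iff_false, not_exists]
      intro v ⟨hv, _⟩
      simp [evnorm] at hv
    rw [hT, sigmaMin, hS, Real.sInf_empty]
    simp
  · -- main case
    have hTlb : ∀ x ∈ {x | ∃ ΔA : Fin (m + 1) → Matrix (Fin n) (Fin n) ℂ,
        (R + ∑ i : Fin (m + 1), μ ^ (i : ℕ) • ΔA i).det = 0 ∧
        x = Real.sqrt (∑ i, sigmaMax (ΔA i) ^ 2)}, (0:ℝ) ≤ x := by
      rintro x ⟨ΔA, _, rfl⟩; positivity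
    -- key step: for each unit vector x, sInf T ≤ evnorm (R *ᵥ x) / Lnorm m μ
    have key : ∀ x : Fin n → ℂ, evnorm x = 1 →
        sInf {y | ∃ ΔA : Fin (m + 1) → Matrix (Fin n) (Fin n) ℂ,
        (R + ∑ i : Fin (m + 1), μ ^ (i : ℕ) • ΔA i).det = 0 ∧
        y = Real.sqrt (∑ i, sigmaMax (ΔA i) ^ 2)} ≤ evnorm (R.mulVec x) / Lnorm m μ := by
      intro x hx1
      have hxsum : ∑ j, ‖x j‖ ^ 2 = 1 := Real.sqrt_eq_one.mp hx1
      have hx0 : x ≠ 0 := by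
        rintro rfl
        simp [evnorm] at hx1
      set u : Fin n → ℂ := R.mulVec x with hu
      set s : ℝ := evnorm u with hs
      have hs0 : 0 ≤ s := evnorm_nonneg' u
      set N : Matrix (Fin n) (Fin n) ℂ := vecMulVec u (fun j => (starRingEnd ℂ) (x j)) with hN
      set ΔA : Fin (m + 1) → Matrix (Fin n) (Fin n) ℂ :=
        fun i => (-(((starRingEnd ℂ) μ) ^ (i : ℕ)) / (c : ℂ)) • N with hΔA
      have hNx : N.mulVec x = u := by
        rw [hN, mulVec_vecMulVec']
        have : ∑ j, (starRingEnd ℂ) (x j) * x j = (1 : ℂ) := by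
          have : ∑ j, (starRingEnd ℂ) (x j) * x j = ((∑ j, ‖x j‖ ^ 2 : ℝ) : ℂ) := by
            push_cast
            refine Finset.sum_congr rfl fun j _ => ?_
            rw [mul_comm, Complex.mul_conj']
          rw [this, hxsum]; norm_num
        rw [this, one_smul]
      have hsum : (∑ i : Fin (m + 1), μ ^ (i : ℕ) • ΔA i) = (-1 : ℂ) • N := by
        have h1 : ∀ i : Fin (m + 1), μ ^ (i : ℕ) • ΔA i
            = (μ ^ (i : ℕ) * (-(((starRingEnd ℂ) μ) ^ (i : ℕ)) / (c : ℂ))) • N := by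
          intro i; rw [hΔA]; simp [smul_smul]
        rw [Finset.sum_congr rfl fun i _ => h1 i, ← Finset.sum_smul]
        congr 1
        have h2 : ∀ i : Fin (m + 1),
            μ ^ (i : ℕ) * (-(((starRingEnd ℂ) μ) ^ (i : ℕ)) / (c : ℂ))
            = -(((‖μ‖ ^ (2 * (i : ℕ)) : ℝ) : ℂ) / (c : ℂ)) := by
          intro i
          have : μ ^ (i : ℕ) * ((starRingEnd ℂ) μ) ^ (i : ℕ)
              = ((‖μ‖ ^ (2 * (i : ℕ)) : ℝ) : ℂ) := by
            rw [← mul_pow, Complex.mul_conj']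
            push_cast
            ring
          rw [← this]; ring
        rw [Finset.sum_congr rfl fun i _ => h2 i, Finset.sum_neg_distrib,
          ← Finset.sum_div, ← Complex.ofReal_sum,
          Fin.sum_univ_eq_sum_range (fun i => (‖μ‖ ^ (2 * i) : ℝ)) (m + 1), ← hc,
          div_self (by exact_mod_cast hc0.ne' : (c : ℂ) ≠ 0)]
      have hdet : (R + ∑ i : Fin (m + 1), μ ^ (i : ℕ) • ΔA i).det = 0 := by
        rw [← Matrix.exists_mulVec_eq_zero_iff]
        refine ⟨x, hx0, ?_⟩
        rw [hsum, Matrix.add_mulVec, Matrix.smul_mulVec, hNx]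
        simp [hu]
      -- bound on sigmaMax (ΔA i)
      have hsm_ub : ∀ i : Fin (m + 1), sigmaMax (ΔA i) ≤ ‖μ‖ ^ (i : ℕ) / c * s := by
        intro i
        refine csSup_le ⟨evnorm ((ΔA i).mulVec x), x, hx1, rfl⟩ ?_
        rintro y ⟨v, hv1, rfl⟩
        have : (ΔA i).mulVec v =
            ((-(((starRingEnd ℂ) μ) ^ (i : ℕ)) / (c : ℂ)) * ∑ j, (starRingEnd ℂ) (x j) * v j) • u := by
          rw [hΔA]
          rw [Matrix.smul_mulVec, hN, mulVec_vecMulVec', smul_smul]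
        rw [this, evnorm_smul', norm_mul]
        have hdot : ‖∑ j, (starRingEnd ℂ) (x j) * v j‖ ≤ 1 := by
          have := evnorm_cs x v
          rwa [hx1, hv1, one_mul] at this
        have hcn : ‖(-(((starRingEnd ℂ) μ) ^ (i : ℕ)) / (c : ℂ))‖ = ‖μ‖ ^ (i : ℕ) / c := by
          rw [norm_div, norm_neg, norm_pow, RCLike.norm_conj]
          congr 1
          rw [Complex.norm_real, Real.norm_of_nonneg hc0.le]
        rw [hcn, ← hs]
        calc ‖μ‖ ^ (i : ℕ) / c * ‖∑ j, (starRingEnd ℂ) (x j) * v j‖ * s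
            ≤ ‖μ‖ ^ (i : ℕ) / c * 1 * s := by
              apply mul_le_mul_of_nonneg_right _ hs0
              exact mul_le_mul_of_nonneg_left hdot (by positivity)
          _ = ‖μ‖ ^ (i : ℕ) / c * s := by ring
      have hsm_nn : ∀ i : Fin (m + 1), 0 ≤ sigmaMax (ΔA i) := by
        intro i
        apply Real.sSup_nonneg
        rintro y ⟨v, hv1, rfl⟩
        exact evnorm_nonneg' _
      have hbd : Real.sqrt (∑ i, sigmaMax (ΔA i) ^ 2) ≤ evnorm (R.mulVec x) / Lnorm m μ := by
        have h1 : ∑ i : Fin (m + 1), sigmaMax (ΔA i) ^ 2 ≤ s ^ 2 / c := by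
          calc ∑ i : Fin (m + 1), sigmaMax (ΔA i) ^ 2
              ≤ ∑ i : Fin (m + 1), (‖μ‖ ^ (i : ℕ) / c * s) ^ 2 := by
                refine Finset.sum_le_sum fun i _ => ?_
                exact pow_le_pow_left₀ (hsm_nn i) (hsm_ub i) 2
            _ = (∑ i : Fin (m + 1), ‖μ‖ ^ (2 * (i : ℕ))) * (s ^ 2 / c ^ 2) := by
                rw [Finset.sum_mul]
                refine Finset.sum_congr rfl fun i _ => ?_
                rw [mul_pow, div_pow, ← pow_mul, mul_comm (i : ℕ) 2]
                ring
            _ = c * (s ^ 2 / c ^ 2) := by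
                rw [Fin.sum_univ_eq_sum_range (fun i => ‖μ‖ ^ (2 * i)) (m + 1), ← hc]
            _ = s ^ 2 / c := by
                field_simp
        calc Real.sqrt (∑ i, sigmaMax (ΔA i) ^ 2) ≤ Real.sqrt (s ^ 2 / c) :=
              Real.sqrt_le_sqrt h1
          _ = s / Lnorm m μ := by
              rw [Real.sqrt_div' _ hc0.le, Real.sqrt_sq hs0]
              rfl
      refine le_trans (csInf_le ⟨0, hTlb⟩ ⟨ΔA, hdet, rfl⟩) hbd
    -- conclude
    rw [le_div_iff₀ hL0, sigmaMin]
    refine le_csInf ?_ ?_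
    · refine ⟨evnorm (R.mulVec (Pi.single ⟨0, hn⟩ 1)), Pi.single ⟨0, hn⟩ 1, ?_, rfl⟩
      unfold evnorm
      rw [Real.sqrt_eq_one]
      rw [Finset.sum_eq_single ⟨0, hn⟩]
      · simp
      · intro b _ hb; simp [Pi.single_apply, hb]
      · simp
    · rintro b ⟨v, hv1, rfl⟩
      rw [← le_div_iff₀ hL0]
      exact key v hv1
end
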